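/- Suppose M ∈ ℂ^{n×n} satisfies M = U R U^T, where U is unitary and R is upper triangular with diagonal entries r_{11}, …, r_{nn} whose absolute values |r_{11}|, …, |r_{nn}| are pairwise distinct. Then M is condiagonalizable. -/

import Mathlib

/-- A matrix `M` is condiagonalizable if `M = X Λ X̄⁻¹` with `X` invertible and `Λ` diagonal. -/
def IsCondiagonalizable {n : ℕ} (M : Matrix (Fin n) (Fin n) ℂ) : Prop :=
  ∃ X Λ : Matrix (Fin n) (Fin n) ℂ, IsUnit X ∧ Λ.IsDiag ∧
    M = X * Λ * (X.map (starRingEnd ℂ))⁻¹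

/-- An eigenvector of an upper-triangular matrix for an eigenvalue occurring (at most)
only at diagonal position `j`, which vanishes at `j`, is zero. -/
lemma eig_vanish_aux {n : ℕ} (A : Matrix (Fin n) (Fin n) ℂ)
    (hA : ∀ i j, j < i → A i j = 0) (j : Fin n) (μ : ℂ)
    (hdiag : ∀ i, i ≠ j → A i i ≠ μ)
    (v : Fin n → ℂ) (hv : A.mulVec v = μ • v) (hvj : v j = 0) : v = 0 := by
  by_contra h
  have hS : (Finset.univ.filter (fun i => v i ≠ 0)).Nonempty := by
    rw [Finset.filter_nonempty_iff]
    obtain ⟨i, hi⟩ := Function.ne_iff.mp h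
    exact ⟨i, Finset.mem_univ i, hi⟩
  set S := Finset.univ.filter (fun i => v i ≠ 0) with hSdef
  obtain ⟨i, hvi, hmax⟩ : ∃ i, v i ≠ 0 ∧ ∀ k, v k ≠ 0 → k ≤ i :=
    ⟨S.max' hS, (Finset.mem_filter.mp (S.max'_mem hS)).2,
      fun k hk => S.le_max' k (Finset.mem_filter.mpr ⟨Finset.mem_univ k, hk⟩)⟩
  have hzero : ∀ k, i < k → v k = 0 := by
    intro k hk
    by_contra hvk
    exact absurd (hmax k hvk) (not_le.mpr hk)
  have hsum : A.mulVec v i = A i i * v i := by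
    rw [Matrix.mulVec, dotProduct]
    refine Finset.sum_eq_single i (fun k _ hk => ?_) (fun h => absurd (Finset.mem_univ i) h)
    rcases lt_or_gt_of_ne hk with hlt | hgt
    · rw [hA i k hlt]; ring
    · rw [hzero k hgt]; ring
  have hmul : A i i * v i = μ * v i := by
    have := congrFun hv i
    rw [hsum] at this
    simpa using this
  have hij : i = j := by
    by_contra hij
    exact hdiag i hij (mul_right_cancel₀ hvi hmul)
  exact hvi (hij ▸ hvj)

/-- Conjugation commutes with `mulVec` in the obvious way. -/
lemma map_conj_mulVec {n : ℕ} (M : Matrix (Fin n) (Fin n) ℂ) (v : Fin n → ℂ) :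
    (M.map (starRingEnd ℂ)).mulVec (fun k => (starRingEnd ℂ) (v k)) =
      fun k => (starRingEnd ℂ) (M.mulVec v k) := by
  funext k
  simp [Matrix.mulVec, dotProduct, map_sum, map_mul]

/-- An upper triangular complex matrix whose diagonal entries have pairwise distinct absolute
values is condiagonalizable. -/
lemma tri_condiag {n : ℕ} (R : Matrix (Fin n) (Fin n) ℂ)
    (hR : ∀ i j, j < i → R i j = 0)
    (hdist : Function.Injective fun i => ‖R i i‖) :
    IsCondiagonalizable R := by
  classical
  set conj := starRingEnd ℂ with hconj
  set Rc := R.map conj with hRc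
  set A := R * Rc with hA
  -- A is upper triangular
  have hRc0 : ∀ i j, j < i → Rc i j = 0 := by
    intro i j hij
    simp [hRc, Matrix.map_apply, hR i j hij]
  have hAtri : ∀ i j, j < i → A i j = 0 := by
    intro i j hij
    rw [hA, Matrix.mul_apply]
    refine Finset.sum_eq_zero fun k _ => ?_
    rcases le_or_gt k j with hk | hk
    · rw [hR i k (hk.trans_lt hij)]; ring
    · rw [hRc0 k j hk]; ring
  have hAdiag : ∀ i, A i i = R i i * conj (R i i) := by
    intro i
    rw [hA, Matrix.mul_apply]
    rw [Finset.sum_eq_single i (fun k _ hk => ?_) (fun h => absurd (Finset.mem_univ i) h)]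
    · rw [hRc, Matrix.map_apply]
    · rcases lt_or_gt_of_ne hk with hlt | hgt
      · rw [hR i k hlt]; ring
      · rw [hRc0 k i hgt]; ring
  set μ : Fin n → ℂ := fun i => R i i * conj (R i i) with hμ
  have hμinj : Function.Injective μ := by
    intro a b hab
    apply hdist
    have : (Complex.normSq (R a a) : ℂ) = (Complex.normSq (R b b) : ℂ) := by
      rwa [← Complex.mul_conj, ← Complex.mul_conj]
    have h2 : Complex.normSq (R a a) = Complex.normSq (R b b) := by exact_mod_cast this
    simp only [Complex.norm_def, h2]
  have hdne : ∀ (j : Fin n), ∀ i, i ≠ j → A i i ≠ μ j := by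
    intro j i hij
    rw [hAdiag i]
    exact fun h => hij (hμinj h)
  -- eigenvectors
  have hex : ∀ j : Fin n, ∃ v : Fin n → ℂ, v ≠ 0 ∧ A.mulVec v = μ j • v := by
    intro j
    set B := A - μ j • (1 : Matrix (Fin n) (Fin n) ℂ) with hB
    have hBtri : B.BlockTriangular id := by
      intro a b hab
      have h1 : (1 : Matrix (Fin n) (Fin n) ℂ) a b = 0 := Matrix.one_apply_ne (ne_of_gt hab)
      simp [hB, hAtri a b hab, h1]
    have hdet : B.det = 0 := by
      rw [Matrix.det_of_upperTriangular hBtri]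
      refine Finset.prod_eq_zero (Finset.mem_univ j) ?_
      simp [hB, Matrix.sub_apply, Matrix.smul_apply, Matrix.one_apply_eq, hAdiag j, hμ]
    obtain ⟨v, hv0, hv⟩ := (Matrix.exists_mulVec_eq_zero_iff).mpr hdet
    refine ⟨v, hv0, ?_⟩
    have := hv
    rw [hB, Matrix.sub_mulVec, Matrix.smul_mulVec, Matrix.one_mulVec, sub_eq_zero] at this
    exact this
  choose x hx0 hxeig using hex
  have hxjj : ∀ j, x j j ≠ 0 := by
    intro j hxjj
    exact hx0 j (eig_vanish_aux A hAtri j (μ j) (hdne j) (x j) (hxeig j) hxjj)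
  -- the con-eigen computation
  set y : Fin n → Fin n → ℂ := fun j => R.mulVec (fun k => conj (x j k)) with hy
  have hμreal : ∀ j, conj (μ j) = μ j := by
    intro j
    simp only [hμ, map_mul]
    rw [hconj, Complex.conj_conj]
    ring
  have hyeig : ∀ j, A.mulVec (y j) = μ j • y j := by
    intro j
    have hstep : Rc.mulVec (y j) = μ j • (fun k => conj (x j k)) := by
      have h1 : Rc.mulVec (y j) = (Rc * R).mulVec (fun k => conj (x j k)) := by
        rw [hy, Matrix.mulVec_mulVec]
      have h2 : Rc * R = (A.map conj) := by
        rw [hA, Matrix.map_mul, hRc, Matrix.map_map]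
        congr 1
        · ext a b; simp [Matrix.map_apply, hconj]
      have h3 : (A.map conj).mulVec (fun k => conj (x j k)) =
          fun k => conj (A.mulVec (x j) k) := map_conj_mulVec A (x j)
      rw [h1, h2, h3]
      funext k
      rw [hxeig j]
      simp only [Pi.smul_apply, smul_eq_mul, map_mul, hμreal j]
    rw [hA, ← Matrix.mulVec_mulVec, hstep, hy, Matrix.mulVec_smul]
  set c : Fin n → ℂ := fun j => y j j / x j j with hc
  have hyx : ∀ j, y j = c j • x j := by
    intro j
    have hv : A.mulVec (y j - c j • x j) = μ j • (y j - c j • x j) := by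
      rw [Matrix.mulVec_sub, Matrix.mulVec_smul, hyeig j, hxeig j, smul_sub, smul_comm]
    have hvj : (y j - c j • x j) j = 0 := by
      simp only [Pi.sub_apply, Pi.smul_apply, smul_eq_mul, hc]
      rw [div_mul_cancel₀ _ (hxjj j), sub_self]
    have := eig_vanish_aux A hAtri j (μ j) (hdne j) _ hv hvj
    rwa [sub_eq_zero] at this
  -- assemble X and Λ
  set X : Matrix (Fin n) (Fin n) ℂ := Matrix.of fun i j => x j i with hX
  have hXlin : LinearIndependent ℂ x := by
    apply Module.End.eigenvectors_linearIndependent' (Matrix.mulVecLin A) μ hμinj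
    intro j
    constructor
    · rw [Module.End.mem_eigenspace_iff, Matrix.mulVecLin_apply]
      exact hxeig j
    · exact hx0 j
  have hXunit : IsUnit X := by
    rw [← Matrix.linearIndependent_cols_iff_isUnit]
    exact hXlin
  set Λ : Matrix (Fin n) (Fin n) ℂ := Matrix.diagonal c with hΛ
  have hXc : R * X.map conj = X * Λ := by
    funext i k
    rw [Matrix.mul_apply]
    have : ∑ l, R i l * (X.map conj) l k = y k i := by
      simp only [hy, Matrix.mulVec, dotProduct, Matrix.map_apply, hX, Matrix.of_apply]
    rw [this, hyx k, hΛ, Matrix.mul_diagonal]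
    simp [hX, mul_comm]
  have hXcunit : IsUnit (X.map ⇑conj).det := by
    have hd : (X.map ⇑conj).det = conj X.det := by
      rw [← RingHom.mapMatrix_apply, ← RingHom.map_det]
    rw [hd]
    exact ((Matrix.isUnit_iff_isUnit_det X).mp hXunit).map conj
  refine ⟨X, Λ, hXunit, Matrix.isDiag_diagonal c, ?_⟩
  rw [← hXc, Matrix.mul_assoc, Matrix.mul_nonsing_inv _ hXcunit, Matrix.mul_one]

/-- If `M = U R Uᵀ` with `U` unitary and `R` upper triangular whose diagonal entries have
pairwise distinct absolute values, then `M` is condiagonalizable. -/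
theorem condiagonalizable_of_contriangular_distinct {n : ℕ}
    (M U R : Matrix (Fin n) (Fin n) ℂ)
    (hU : U ∈ Matrix.unitaryGroup (Fin n) ℂ)
    (hR : ∀ i j, j < i → R i j = 0)
    (hdist : Function.Injective fun i => ‖R i i‖)
    (hM : M = U * R * U.transpose) :
    IsCondiagonalizable M := by
  obtain ⟨X, Λ, hXunit, hΛ, hRX⟩ := tri_condiag R hR hdist
  have hUu : U * star U = 1 := Matrix.mem_unitaryGroup_iff.mp hU
  have hUunit : IsUnit U := ⟨⟨U, star U, hUu, Matrix.mem_unitaryGroup_iff'.mp hU⟩, rfl⟩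
  have hstar : star U = U.transpose.map (starRingEnd ℂ) := by
    funext i j
    simp [Matrix.star_apply, Matrix.transpose_apply, Matrix.map_apply]
  have hUc1 : U.map (starRingEnd ℂ) * U.transpose = 1 := by
    have h : (U * star U).map (starRingEnd ℂ) = (1 : Matrix (Fin n) (Fin n) ℂ).map (starRingEnd ℂ) := by
      rw [hUu]
    rw [hstar, Matrix.map_mul, Matrix.map_map] at h
    have h2 : U.transpose.map ((starRingEnd ℂ) ∘ (starRingEnd ℂ)) = U.transpose := by
      funext i j; simp [Matrix.map_apply]
    have h3 : (1 : Matrix (Fin n) (Fin n) ℂ).map (starRingEnd ℂ) = 1 := by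
      funext i j
      by_cases hij : i = j <;> simp [Matrix.map_apply, Matrix.one_apply, hij]
    rw [h2, h3] at h
    exact h
  have hUcinv : (U.map (starRingEnd ℂ))⁻¹ = U.transpose := Matrix.inv_eq_right_inv hUc1
  refine ⟨U * X, Λ, hUunit.mul hXunit, hΛ, ?_⟩
  rw [Matrix.map_mul, Matrix.mul_inv_rev, hUcinv, hM, hRX]
  simp only [Matrix.mul_assoc]
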